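/- arXiv:2107.00744 — 6 statements merged into one kernel-verified Lean document; each statement's English description precedes it below -/
import Mathlib

section
/- Fix indices i, j with 1 ≤ i ≤ q, 1 ≤ j ≤ p, and let F(s) = D(W, A, S') where S' agrees with S except that its (i,j) entry is replaced by s. Then F is twice differentiable and its second derivative is constant, equal to 2·(Aᵀ·Wᵀ·W·A)_{ii} at every s ∈ ℝ. -/
open Matrix

/-- The GBR-NMF objective `D(W,A,S) = ‖X − W·A·S‖_F² = Tr((X − WAS)(X − WAS)ᵀ)`. -/
noncomputable def objD {n p q : ℕ} (X : Matrix (Fin n) (Fin p) ℝ)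
    (W : Matrix (Fin n) (Fin q) ℝ) (A : Matrix (Fin q) (Fin q) ℝ)
    (S : Matrix (Fin q) (Fin p) ℝ) : ℝ :=
  Matrix.trace ((X - W * A * S) * (X - W * A * S)ᵀ)

/-- The matrix agreeing with `M` except that its `(i,j)` entry is replaced by `w`. -/
def updEntry {m k : ℕ} (M : Matrix (Fin m) (Fin k) ℝ) (i : Fin m) (j : Fin k) (w : ℝ) :
    Matrix (Fin m) (Fin k) ℝ :=
  fun a b => if a = i ∧ b = j then w else M a b

lemma updEntry_eq {m k : ℕ} (M : Matrix (Fin m) (Fin k) ℝ) (i : Fin m) (j : Fin k) (w : ℝ) :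
    updEntry M i j w = M + (w - M i j) • Matrix.single i j 1 := by
  ext a b
  by_cases h : a = i ∧ b = j
  · obtain ⟨rfl, rfl⟩ := h
    simp [updEntry, Matrix.single, Matrix.add_apply]
  · have h' : ¬(i = a ∧ j = b) := by tauto
    simp [updEntry, Matrix.single, Matrix.add_apply, h, h']

lemma objD_add_smul {n p q : ℕ} (X : Matrix (Fin n) (Fin p) ℝ)
    (W : Matrix (Fin n) (Fin q) ℝ) (A : Matrix (Fin q) (Fin q) ℝ)
    (S E : Matrix (Fin q) (Fin p) ℝ) (t : ℝ) :
    objD X W A (S + t • E) =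
      Matrix.trace ((X - W*A*S) * (X - W*A*S)ᵀ)
      - t * (Matrix.trace ((X - W*A*S) * (W*A*E)ᵀ) + Matrix.trace ((W*A*E) * (X - W*A*S)ᵀ))
      + t^2 * Matrix.trace ((W*A*E) * (W*A*E)ᵀ) := by
  have h : X - W*A*(S + t•E) = (X - W*A*S) - t • (W*A*E) := by
    rw [Matrix.mul_add, Matrix.mul_smul]; abel
  simp only [objD, h, Matrix.sub_mul, Matrix.mul_sub, Matrix.transpose_sub, Matrix.transpose_smul,
    Matrix.smul_mul, Matrix.mul_smul, Matrix.trace_sub, Matrix.trace_smul, smul_eq_mul,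
    smul_smul]
  ring

lemma trace_WAE {n p q : ℕ} (W : Matrix (Fin n) (Fin q) ℝ) (A : Matrix (Fin q) (Fin q) ℝ)
    (i : Fin q) (j : Fin p) :
    Matrix.trace ((W*A*(Matrix.single i j (1:ℝ))) * (W*A*(Matrix.single i j (1:ℝ)))ᵀ)
      = (Aᵀ * Wᵀ * W * A) i i := by
  have hM : ∀ a b, (W*A*(Matrix.single i j (1:ℝ))) a b
      = if b = j then (W*A) a i else 0 := by
    intro a b
    simp [Matrix.mul_apply, Matrix.single, ite_and]
    by_cases hb : b = j
    · simp [hb]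
    · simp [hb, Ne.symm hb]
  have hR : (Aᵀ * Wᵀ * W * A) i i = ∑ a, (W*A) a i * (W*A) a i := by
    have : Aᵀ * Wᵀ * W * A = (W*A)ᵀ * (W*A) := by
      simp [Matrix.transpose_mul, Matrix.mul_assoc]
    rw [this, Matrix.mul_apply]
    simp [Matrix.transpose_apply]
  rw [hR]
  simp only [Matrix.trace, Matrix.diag, Matrix.mul_apply, Matrix.transpose_apply, hM]
  rw [Finset.sum_comm]
  simp

/-- With `F(s) = D(W, A, S')` where `S'` is `S` with entry `(i,j)` replaced by `s`,
`F` is twice differentiable and its second derivative is constantly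
`2·(Aᵀ·Wᵀ·W·A)_{ii}`. -/
theorem second_deriv_objD_entry_S
    (n p q : ℕ)
    (X : Matrix (Fin n) (Fin p) ℝ) (W : Matrix (Fin n) (Fin q) ℝ)
    (A : Matrix (Fin q) (Fin q) ℝ) (S : Matrix (Fin q) (Fin p) ℝ)
    (i : Fin q) (j : Fin p) :
    (∀ s : ℝ, DifferentiableAt ℝ (fun s => objD X W A (updEntry S i j s)) s) ∧
    (∀ s : ℝ,
      HasDerivAt (deriv (fun s => objD X W A (updEntry S i j s)))
        (2 * (Aᵀ * Wᵀ * W * A) i i) s) := by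
  set E : Matrix (Fin q) (Fin p) ℝ := Matrix.single i j 1 with hE
  set R : Matrix (Fin n) (Fin p) ℝ := X - W*A*S with hR
  set c0 : ℝ := Matrix.trace (R * Rᵀ) with hc0
  set c1 : ℝ := Matrix.trace (R * (W*A*E)ᵀ) + Matrix.trace ((W*A*E) * Rᵀ) with hc1
  set a : ℝ := Matrix.trace ((W*A*E) * (W*A*E)ᵀ) with ha
  set d : ℝ := S i j with hd
  have hF : (fun s => objD X W A (updEntry S i j s))
      = fun s => c0 - (s - d) * c1 + (s - d)^2 * a := by
    funext s
    rw [updEntry_eq, objD_add_smul]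
  have hder : ∀ s : ℝ, HasDerivAt (fun s => c0 - (s - d) * c1 + (s - d)^2 * a)
      (-c1 + 2*(s - d)*a) s := by
    intro s
    have h1 : HasDerivAt (fun s : ℝ => s - d) 1 s := (hasDerivAt_id s).sub_const d
    have h2 : HasDerivAt (fun s : ℝ => c0 - (s - d) * c1) (-c1) s := by
      have := ((h1.mul_const c1).const_sub c0)
      simpa using this
    have h3 : HasDerivAt (fun s : ℝ => (s - d)^2 * a) (2*(s - d)*a) s := by
      have := (h1.pow 2).mul_const a
      simpa [mul_comm, mul_assoc, mul_left_comm] using this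
    exact h2.add h3
  have hderiv : deriv (fun s => objD X W A (updEntry S i j s))
      = fun s => -c1 + 2*(s - d)*a := by
    funext s
    rw [hF]
    exact (hder s).deriv
  constructor
  · intro s
    rw [hF]
    exact (hder s).differentiableAt
  · intro s
    rw [hderiv]
    have h1 : HasDerivAt (fun s : ℝ => 2*(s - d)*a) (2*a) s := by
      have := (((hasDerivAt_id s).sub_const d).const_mul 2).mul_const a
      simpa using this
    have h2 := h1.const_add (-c1)
    have haa : a = (Aᵀ * Wᵀ * W * A) i i := trace_WAE W A i j
    rw [← haa]
    simpa using h2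
end

section
/- Fix indices i, j with 1 ≤ i, j ≤ q. Assume W, A, S have nonnegative entries and a^t := A_{ij} > 0. Let F(a) = D(W, A', S) where A' agrees with A except that its (i,j) entry is replaced by a, and define G(a, a^t) = F(a^t) + F'(a^t)·(a − a^t) + ((Wᵀ·W·A·S·Sᵀ)_{ij} / a^t)·(a − a^t)², where F' denotes the derivative of F. Then G is an auxiliary function for F: G(a^t, a^t) = F(a^t) and G(a, a^t) ≥ F(a) for all a ∈ ℝ. -/
open Matrix

lemma trace_residual_expand {n p : ℕ} (R M : Matrix (Fin n) (Fin p) ℝ) (t : ℝ) :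
    Matrix.trace ((R - t • M) * (R - t • M)ᵀ)
      = Matrix.trace (R * Rᵀ) - 2 * Matrix.trace (R * Mᵀ) * t
        + Matrix.trace (M * Mᵀ) * t ^ 2 := by
  have h : Matrix.trace (M * Rᵀ) = Matrix.trace (R * Mᵀ) := by
    rw [← Matrix.trace_transpose (M * Rᵀ), Matrix.transpose_mul, Matrix.transpose_transpose]
  rw [Matrix.transpose_sub, Matrix.transpose_smul, Matrix.sub_mul, Matrix.mul_sub, Matrix.mul_sub,
    Matrix.smul_mul, Matrix.smul_mul, Matrix.mul_smul, Matrix.mul_smul]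
  simp only [Matrix.trace_sub, Matrix.trace_smul, smul_eq_mul, h]
  ring

lemma updEntry_eq_add {q : ℕ} (A : Matrix (Fin q) (Fin q) ℝ) (i j : Fin q) (a : ℝ) :
    updEntry A i j a = A + (a - A i j) • (Matrix.single i j (1:ℝ)) := by
  ext x y
  simp only [updEntry, Matrix.add_apply, Matrix.smul_apply, Matrix.single,
    Matrix.of_apply, smul_eq_mul]
  by_cases hx : x = i <;> by_cases hy : y = j <;>
    simp [hx, hy] <;> simp_all [eq_comm]

lemma sandwich_entry {n p q : ℕ} (W : Matrix (Fin n) (Fin q) ℝ) (S : Matrix (Fin q) (Fin p) ℝ)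
    (i j : Fin q) (x : Fin n) (y : Fin p) :
    (W * Matrix.single i j (1:ℝ) * S) x y = W x i * S j y := by
  simp only [Matrix.mul_apply, Matrix.single, Matrix.of_apply, mul_ite, mul_one,
    mul_zero, ite_and, Finset.sum_ite_eq, Finset.mem_univ, if_true, ite_mul, zero_mul,
    Finset.sum_ite_eq', Finset.sum_ite_irrel, Finset.sum_const_zero]

/-- (Lemma on `A`-updates.) With `aᵗ = A_{ij} > 0`, `F(a) = D(W, A', S)` (entry `(i,j)` of `A`
replaced by `a`), the function
`G(a, aᵗ) = F(aᵗ) + F'(aᵗ)(a − aᵗ) + ((Wᵀ·W·A·S·Sᵀ)_{ij}/aᵗ)(a − aᵗ)²`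
is an auxiliary function for `F`: `G(aᵗ, aᵗ) = F(aᵗ)` and `G(a, aᵗ) ≥ F(a)` for all `a`. -/
theorem aux_function_for_A_update
    (n p q : ℕ)
    (X : Matrix (Fin n) (Fin p) ℝ) (W : Matrix (Fin n) (Fin q) ℝ)
    (A : Matrix (Fin q) (Fin q) ℝ) (S : Matrix (Fin q) (Fin p) ℝ)
    (hW : ∀ i j, 0 ≤ W i j) (hA : ∀ i j, 0 ≤ A i j) (hS : ∀ i j, 0 ≤ S i j)
    (i j : Fin q) (hpos : 0 < A i j) :
    let F : ℝ → ℝ := fun a => objD X W (updEntry A i j a) S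
    let G : ℝ → ℝ := fun a =>
      F (A i j) + deriv F (A i j) * (a - A i j)
        + ((Wᵀ * W * A * S * Sᵀ) i j / A i j) * (a - A i j) ^ 2
    G (A i j) = F (A i j) ∧ ∀ a : ℝ, G a ≥ F a := by
  intro F G
  set a₀ := A i j with ha₀
  set R : Matrix (Fin n) (Fin p) ℝ := X - W * A * S with hR
  set M : Matrix (Fin n) (Fin p) ℝ := W * (Matrix.single i j (1:ℝ)) * S with hM
  set F₀ : ℝ := Matrix.trace (R * Rᵀ) with hF₀
  set b : ℝ := -(2 * Matrix.trace (R * Mᵀ)) with hb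
  set c : ℝ := Matrix.trace (M * Mᵀ) with hc
  -- F is a quadratic
  have hF : ∀ a : ℝ, F a = F₀ + b * (a - a₀) + c * (a - a₀) ^ 2 := by
    intro a
    have h1 : X - W * updEntry A i j a * S = R - (a - a₀) • M := by
      rw [updEntry_eq_add, Matrix.mul_add, Matrix.add_mul, Matrix.mul_smul, Matrix.smul_mul,
        hR, hM]
      abel
    show Matrix.trace _ = _
    rw [h1, trace_residual_expand]
    ring
  -- derivative of F at a₀
  have hderiv : deriv F a₀ = b := by
    have hFD : HasDerivAt F b a₀ := by
      have hfun : F = fun a => F₀ + b * (a - a₀) + c * (a - a₀) ^ 2 := funext hF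
      rw [hfun]
      have h1 : HasDerivAt (fun a : ℝ => a - a₀) 1 a₀ := (hasDerivAt_id a₀).sub_const a₀
      have h2 : HasDerivAt (fun a : ℝ => F₀ + b * (a - a₀)) (b * 1) a₀ :=
        (h1.const_mul b).const_add F₀
      have h3 : HasDerivAt (fun a : ℝ => c * (a - a₀) ^ 2)
          (c * (2 * (a₀ - a₀) ^ 1 * 1)) a₀ := ((h1.pow 2)).const_mul c
      have := h2.add h3
      simpa [Pi.add_def] using this
    exact hFD.deriv
  -- trace (M * Mᵀ) in explicit form
  have hcval : c = (Wᵀ * W) i i * (S * Sᵀ) j j := by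
    rw [hc]
    rw [Matrix.trace]
    simp only [Matrix.diag_apply, Matrix.mul_apply, Matrix.transpose_apply]
    have : ∀ x y, M x y = W x i * S j y := fun x y => sandwich_entry W S i j x y
    simp only [this]
    rw [Finset.sum_mul_sum]
    exact Finset.sum_congr rfl fun x _ => Finset.sum_congr rfl fun y _ => by ring
  -- nonnegativity facts
  have hPn : ∀ k l, 0 ≤ (Wᵀ * W) k l := by
    intro k l
    rw [Matrix.mul_apply]
    exact Finset.sum_nonneg fun x _ => mul_nonneg (hW x k) (hW x l)
  have hQn : ∀ k l, 0 ≤ (S * Sᵀ) k l := by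
    intro k l
    rw [Matrix.mul_apply]
    exact Finset.sum_nonneg fun y _ => mul_nonneg (hS k y) (hS l y)
  have hPA : ∀ k l, 0 ≤ ((Wᵀ * W) * A) k l := by
    intro k l
    rw [Matrix.mul_apply]
    exact Finset.sum_nonneg fun x _ => mul_nonneg (hPn k x) (hA x l)
  -- the key bound
  have hkey : (Wᵀ * W) i i * a₀ * (S * Sᵀ) j j ≤ (Wᵀ * W * A * S * Sᵀ) i j := by
    have hassoc : Wᵀ * W * A * S * Sᵀ = (Wᵀ * W) * A * (S * Sᵀ) := by
      rw [Matrix.mul_assoc (Wᵀ * W * A)]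
    rw [hassoc]
    have h1 : (Wᵀ * W) i i * A i j ≤ ((Wᵀ * W) * A) i j := by
      rw [Matrix.mul_apply]
      exact Finset.single_le_sum (f := fun k => (Wᵀ * W) i k * A k j)
        (fun k _ => mul_nonneg (hPn i k) (hA k j)) (Finset.mem_univ i)
    have h2 : ((Wᵀ * W) * A) i j * (S * Sᵀ) j j ≤ ((Wᵀ * W) * A * (S * Sᵀ)) i j := by
      rw [Matrix.mul_apply]
      exact Finset.single_le_sum (f := fun l => ((Wᵀ * W) * A) i l * (S * Sᵀ) l j)
        (fun l _ => mul_nonneg (hPA i l) (hQn l j))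
        (Finset.mem_univ j)
    calc (Wᵀ * W) i i * a₀ * (S * Sᵀ) j j
        = ((Wᵀ * W) i i * A i j) * (S * Sᵀ) j j := by rw [ha₀]
      _ ≤ ((Wᵀ * W) * A) i j * (S * Sᵀ) j j :=
          mul_le_mul_of_nonneg_right h1 (hQn j j)
      _ ≤ ((Wᵀ * W) * A * (S * Sᵀ)) i j := h2
  have hcle : c ≤ (Wᵀ * W * A * S * Sᵀ) i j / a₀ := by
    rw [hcval, le_div_iff₀ hpos]
    calc (Wᵀ * W) i i * (S * Sᵀ) j j * a₀ = (Wᵀ * W) i i * a₀ * (S * Sᵀ) j j := by ring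
      _ ≤ _ := hkey
  constructor
  · show F a₀ + deriv F a₀ * (a₀ - a₀) + _ * (a₀ - a₀) ^ 2 = F a₀
    ring
  · intro a
    show F a₀ + deriv F a₀ * (a - a₀) + ((Wᵀ * W * A * S * Sᵀ) i j / a₀) * (a - a₀) ^ 2 ≥ F a
    rw [hderiv, hF a, hF a₀]
    have h := mul_le_mul_of_nonneg_right hcle (sq_nonneg (a - a₀))
    nlinarith [sq_nonneg (a - a₀)]
end

section
/- Fix indices i, j with 1 ≤ i ≤ q, 1 ≤ j ≤ p. Assume W, A, S have nonnegative entries and s^t := S_{ij} > 0. Let F(s) = D(W, A, S') where S' agrees with S except that its (i,j) entry is replaced by s, and define G(s, s^t) = F(s^t) + F'(s^t)·(s − s^t) + ((Aᵀ·Wᵀ·W·A·S)_{ij} / s^t)·(s − s^t)², where F' denotes the derivative of F. Then G is an auxiliary function for F: G(s^t, s^t) = F(s^t) and G(s, s^t) ≥ F(s) for all s ∈ ℝ. -/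
open Matrix

/-- (Lemma on `S`-updates.) With `sᵗ = S_{ij} > 0`, `F(s) = D(W, A, S')` (entry `(i,j)` of `S`
replaced by `s`), the function
`G(s, sᵗ) = F(sᵗ) + F'(sᵗ)(s − sᵗ) + ((Aᵀ·Wᵀ·W·A·S)_{ij}/sᵗ)(s − sᵗ)²`
is an auxiliary function for `F`: `G(sᵗ, sᵗ) = F(sᵗ)` and `G(s, sᵗ) ≥ F(s)` for all `s`. -/
theorem aux_function_for_S_update
    (n p q : ℕ)
    (X : Matrix (Fin n) (Fin p) ℝ) (W : Matrix (Fin n) (Fin q) ℝ)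
    (A : Matrix (Fin q) (Fin q) ℝ) (S : Matrix (Fin q) (Fin p) ℝ)
    (hW : ∀ i j, 0 ≤ W i j) (hA : ∀ i j, 0 ≤ A i j) (hS : ∀ i j, 0 ≤ S i j)
    (i : Fin q) (j : Fin p) (hpos : 0 < S i j) :
    let F : ℝ → ℝ := fun s => objD X W A (updEntry S i j s)
    let G : ℝ → ℝ := fun s =>
      F (S i j) + deriv F (S i j) * (s - S i j)
        + ((Aᵀ * Wᵀ * W * A * S) i j / S i j) * (s - S i j) ^ 2
    G (S i j) = F (S i j) ∧ ∀ s : ℝ, G s ≥ F s := by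
  intro F G
  set st := S i j with hst
  set B : Matrix (Fin n) (Fin q) ℝ := W * A with hBdef
  have hB : ∀ a k, 0 ≤ B a k := by
    intro a k
    rw [hBdef, Matrix.mul_apply]
    exact Finset.sum_nonneg fun x _ => mul_nonneg (hW a x) (hA x k)
  set E : Matrix (Fin q) (Fin p) ℝ := Matrix.single i j 1 with hEdef
  set M : Matrix (Fin n) (Fin p) ℝ := B * E with hMdef
  set R : Matrix (Fin n) (Fin p) ℝ := X - W * A * S with hRdef
  -- entries of M
  have hMab : ∀ a b, M a b = if j = b then B a i else 0 := by
    intro a b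
    simp only [hMdef, hEdef, Matrix.mul_apply, Matrix.single, of_apply, ite_and, mul_ite,
      mul_one, mul_zero]
    rw [Finset.sum_ite_eq (Finset.univ) i (fun k => if j = b then B a k else 0)]
    simp
  -- updEntry as rank-one update
  have hupd : ∀ s : ℝ, updEntry S i j s = S + (s - st) • E := by
    intro s
    funext a b
    simp only [updEntry, hEdef, Matrix.add_apply, Matrix.smul_apply, Matrix.single, of_apply,
      smul_eq_mul]
    by_cases ha : a = i <;> by_cases hb : b = j <;>
      simp [ha, hb, Ne.symm, eq_comm, hst]
  -- F as an explicit quadratic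
  set a : ℝ := Matrix.trace (M * Mᵀ) with hadef
  set b : ℝ := -(Matrix.trace (R * Mᵀ) + Matrix.trace (M * Rᵀ)) with hbdef
  set c0 : ℝ := Matrix.trace (R * Rᵀ) with hc0def
  have hres : ∀ s : ℝ, X - W * A * updEntry S i j s = R - (s - st) • M := by
    intro s
    rw [hupd s, Matrix.mul_add, Matrix.mul_smul, hRdef, hMdef, hBdef]
    abel
  have hF : ∀ s : ℝ, F s = c0 + b * (s - st) + a * (s - st) ^ 2 := by
    intro s
    show Matrix.trace ((X - W * A * updEntry S i j s) * (X - W * A * updEntry S i j s)ᵀ)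
        = c0 + b * (s - st) + a * (s - st) ^ 2
    rw [hres s]
    set t : ℝ := s - st
    rw [Matrix.transpose_sub, Matrix.transpose_smul, Matrix.sub_mul, Matrix.mul_sub,
      Matrix.mul_sub, Matrix.smul_mul, Matrix.smul_mul, Matrix.mul_smul]
    simp only [Matrix.trace_sub, Matrix.trace_smul, Matrix.mul_smul, smul_smul, smul_eq_mul,
      hadef, hbdef, hc0def]
    ring
  -- derivative of F at st
  have hFeq : F = fun s => c0 + b * (s - st) + a * (s - st) ^ 2 := funext hF
  have hderiv : deriv F st = b := by
    rw [hFeq]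
    have h1 : HasDerivAt (fun s : ℝ => s - st) 1 st := (hasDerivAt_id st).sub_const st
    have h2 : HasDerivAt (fun s : ℝ => b * (s - st)) (b * 1) st := h1.const_mul b
    have h3 : HasDerivAt (fun s : ℝ => a * (s - st) ^ 2)
        (a * (2 * (st - st) ^ 1 * 1)) st := (h1.pow 2).const_mul a
    have h := ((hasDerivAt_const st c0).add h2).add h3
    exact h.deriv.trans (by simp)
  -- a = ((W*A)ᵀ * (W*A)) i i
  have htrace : a = (Bᵀ * B) i i := by
    rw [hadef, Matrix.trace]
    simp only [Matrix.diag_apply, Matrix.mul_apply, Matrix.transpose_apply, hMab]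
    simp [ite_mul, zero_mul, Finset.sum_ite_eq]
  -- the quadratic coefficient bound
  have hassoc : Aᵀ * Wᵀ * W * A * S = (Bᵀ * B) * S := by
    rw [hBdef, Matrix.transpose_mul, Matrix.mul_assoc (Aᵀ * Wᵀ) W A]
  have hCnonneg : ∀ k, 0 ≤ (Bᵀ * B) i k := by
    intro k
    simp only [Matrix.mul_apply, Matrix.transpose_apply]
    exact Finset.sum_nonneg fun x _ => mul_nonneg (hB x i) (hB x k)
  have hbound : a * st ≤ (Aᵀ * Wᵀ * W * A * S) i j := by
    rw [htrace, hassoc]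
    have : (Bᵀ * B) i i * S i j ≤ ∑ k, (Bᵀ * B) i k * S k j := by
      exact Finset.single_le_sum (f := fun k => (Bᵀ * B) i k * S k j)
        (fun k _ => mul_nonneg (hCnonneg k) (hS k j)) (Finset.mem_univ i)
    simpa [Matrix.mul_apply, hst] using this
  constructor
  · show F st + deriv F st * (st - st) + _ * (st - st) ^ 2 = F st
    simp
  · intro s
    show F st + deriv F st * (s - st) + ((Aᵀ * Wᵀ * W * A * S) i j / st) * (s - st) ^ 2 ≥ F s
    rw [hderiv, hF s, hF st]
    have hale : a ≤ (Aᵀ * Wᵀ * W * A * S) i j / st := (le_div_iff₀ hpos).mpr hbound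
    nlinarith [sq_nonneg (s - st), mul_le_mul_of_nonneg_right hale (sq_nonneg (s - st))]
end

section
/- Fix indices i, j with 1 ≤ i ≤ n, 1 ≤ j ≤ q. Assume w^t := W_{ij} > 0 and (W·A·S·Sᵀ·Aᵀ)_{ij} > 0. Let F(w) = D(W', A, S) where W' agrees with W except that its (i,j) entry is replaced by w, and let G(w, w^t) = F(w^t) + F'(w^t)·(w − w^t) + ((W·A·S·Sᵀ·Aᵀ)_{ij} / w^t)·(w − w^t)². Then the function w ↦ G(w, w^t) has a unique global minimizer, and that minimizer equals the multiplicative update w^t · (X·Sᵀ·Aᵀ)_{ij} / (W·A·S·Sᵀ·Aᵀ)_{ij}. -/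
open Matrix

lemma trace_single_mul {n q : ℕ} (i : Fin n) (j : Fin q) (M : Matrix (Fin q) (Fin n) ℝ) :
    Matrix.trace (Matrix.single i j (1:ℝ) * M) = M j i := by
  simp [Matrix.trace, Matrix.diag, Matrix.mul_apply, Matrix.single, ite_and]

lemma trace_single_mul_mul_transpose {n q : ℕ} (i : Fin n) (j : Fin q)
    (M : Matrix (Fin q) (Fin q) ℝ) :
    Matrix.trace (Matrix.single i j (1:ℝ) * M *
      (Matrix.single i j (1:ℝ))ᵀ) = M j j := by
  simp [Matrix.trace, Matrix.diag, Matrix.mul_apply, Matrix.single,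
    Matrix.transpose_apply, ite_and, Finset.sum_mul, mul_ite]

lemma upd_eq {n q : ℕ} (W : Matrix (Fin n) (Fin q) ℝ) (i : Fin n) (j : Fin q) (w : ℝ) :
    updEntry W i j w = W + (w - W i j) • Matrix.single i j (1:ℝ) := by
  funext a b
  simp only [updEntry, Matrix.add_apply, Matrix.smul_apply, smul_eq_mul]
  by_cases ha : a = i
  · by_cases hb : b = j
    · subst ha; subst hb
      rw [if_pos ⟨rfl, rfl⟩, Matrix.single_apply_same]; ring
    · have h1 : ¬(a = i ∧ b = j) := fun h => hb h.2
      have h2 : ¬(i = a ∧ j = b) := fun h => hb h.2.symm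
      rw [if_neg h1, Matrix.single_apply_of_ne (h := h2)]; ring
  · have h1 : ¬(a = i ∧ b = j) := fun h => ha h.1
    have h2 : ¬(i = a ∧ j = b) := fun h => ha h.1.symm
    rw [if_neg h1, Matrix.single_apply_of_ne (h := h2)]; ring

lemma F_expand {n p q : ℕ} (X : Matrix (Fin n) (Fin p) ℝ) (W : Matrix (Fin n) (Fin q) ℝ)
    (A : Matrix (Fin q) (Fin q) ℝ) (S : Matrix (Fin q) (Fin p) ℝ)
    (i : Fin n) (j : Fin q) (w : ℝ) :
    objD X (updEntry W i j w) A S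
      = objD X W A S
        - 2 * ((X * Sᵀ * Aᵀ) i j - (W * A * S * Sᵀ * Aᵀ) i j) * (w - W i j)
        + ((A * S * Sᵀ * Aᵀ) j j) * (w - W i j) ^ 2 := by
  set E : Matrix (Fin n) (Fin q) ℝ := Matrix.single i j (1:ℝ) with hE
  set R : Matrix (Fin n) (Fin p) ℝ := X - W * A * S with hR
  set c : ℝ := w - W i j with hc
  set N : Matrix (Fin n) (Fin p) ℝ := E * A * S with hN
  have h1 : X - updEntry W i j w * A * S = R - c • N := by
    rw [upd_eq]
    simp only [hR, hN, hc, hE, Matrix.add_mul, Matrix.smul_mul, sub_add_eq_sub_sub,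
      Matrix.mul_assoc]
  have h2 : Matrix.trace (N * Rᵀ) = (R * Sᵀ * Aᵀ) i j := by
    have : N * Rᵀ = E * (A * S * Rᵀ) := by simp only [hN, Matrix.mul_assoc]
    rw [this, _root_.trace_single_mul]
    have : (A * S * Rᵀ)ᵀ = R * Sᵀ * Aᵀ := by
      simp [Matrix.transpose_mul, Matrix.mul_assoc]
    rw [← this, Matrix.transpose_apply]
  have h2' : Matrix.trace (R * Nᵀ) = (R * Sᵀ * Aᵀ) i j := by
    rw [← Matrix.trace_transpose (R * Nᵀ), Matrix.transpose_mul, Matrix.transpose_transpose, h2]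
  have h3 : Matrix.trace (N * Nᵀ) = (A * S * Sᵀ * Aᵀ) j j := by
    have : N * Nᵀ = E * (A * S * Sᵀ * Aᵀ) * Eᵀ := by
      rw [hN]; simp [Matrix.transpose_mul, Matrix.mul_assoc]
    rw [this, trace_single_mul_mul_transpose]
  have h4 : (R * Sᵀ * Aᵀ) i j = (X * Sᵀ * Aᵀ) i j - (W * A * S * Sᵀ * Aᵀ) i j := by
    rw [hR]
    simp [Matrix.sub_mul]
  have expand : (R - c • N) * (R - c • N)ᵀ
      = R * Rᵀ - c • (R * Nᵀ) - c • (N * Rᵀ) + (c * c) • (N * Nᵀ) := by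
    simp only [Matrix.transpose_sub, Matrix.transpose_smul, Matrix.sub_mul, Matrix.mul_sub,
      Matrix.smul_mul, Matrix.mul_smul, smul_sub, smul_smul]
    abel
  simp only [objD, h1, expand, Matrix.trace_add, Matrix.trace_sub, Matrix.trace_smul,
    h2, h2', h3, h4, smul_eq_mul]
  ring

/-- With `wᵗ = W_{ij} > 0` and `(W·A·S·Sᵀ·Aᵀ)_{ij} > 0`, the auxiliary quadratic
`G(w, wᵗ) = F(wᵗ) + F'(wᵗ)(w − wᵗ) + ((W·A·S·Sᵀ·Aᵀ)_{ij}/wᵗ)(w − wᵗ)²`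
has a unique global minimizer, equal to the multiplicative update
`wᵗ · (X·Sᵀ·Aᵀ)_{ij} / (W·A·S·Sᵀ·Aᵀ)_{ij}`. -/
theorem aux_function_unique_minimizer_is_multiplicative_update
    (n p q : ℕ)
    (X : Matrix (Fin n) (Fin p) ℝ) (W : Matrix (Fin n) (Fin q) ℝ)
    (A : Matrix (Fin q) (Fin q) ℝ) (S : Matrix (Fin q) (Fin p) ℝ)
    (i : Fin n) (j : Fin q)
    (hpos : 0 < W i j) (hden : 0 < (W * A * S * Sᵀ * Aᵀ) i j) :
    let F : ℝ → ℝ := fun w => objD X (updEntry W i j w) A S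
    let G : ℝ → ℝ := fun w =>
      F (W i j) + deriv F (W i j) * (w - W i j)
        + ((W * A * S * Sᵀ * Aᵀ) i j / W i j) * (w - W i j) ^ 2
    let wstar : ℝ := W i j * (X * Sᵀ * Aᵀ) i j / (W * A * S * Sᵀ * Aᵀ) i j
    (∀ w : ℝ, G wstar ≤ G w) ∧ (∀ m : ℝ, (∀ w : ℝ, G m ≤ G w) → m = wstar) := by
  
  intro F G wstar
  have hGdef : ∀ w : ℝ, G w = F (W i j) + deriv F (W i j) * (w - W i j)
      + ((W * A * S * Sᵀ * Aᵀ) i j / W i j) * (w - W i j) ^ 2 := fun _ => rfl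
  have hwstar : wstar = W i j * (X * Sᵀ * Aᵀ) i j / (W * A * S * Sᵀ * Aᵀ) i j := rfl
  have ht0 : W i j ≠ 0 := ne_of_gt hpos
  have hd0 : (W * A * S * Sᵀ * Aᵀ) i j ≠ 0 := ne_of_gt hden
  -- F as an explicit quadratic
  have hFfun : F = fun w => objD X W A S
      - 2 * ((X * Sᵀ * Aᵀ) i j - (W * A * S * Sᵀ * Aᵀ) i j) * (w - W i j)
      + ((A * S * Sᵀ * Aᵀ) j j) * (w - W i j) ^ 2 :=
    funext fun w => F_expand X W A S i j w
  have hderiv : deriv F (W i j)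
      = -2 * ((X * Sᵀ * Aᵀ) i j - (W * A * S * Sᵀ * Aᵀ) i j) := by
    rw [hFfun]
    have h1 : HasDerivAt (fun w : ℝ => w - W i j) 1 (W i j) :=
      (hasDerivAt_id (W i j)).sub_const (W i j)
    have hlin : HasDerivAt
        (fun w : ℝ => 2 * ((X * Sᵀ * Aᵀ) i j - (W * A * S * Sᵀ * Aᵀ) i j) * (w - W i j))
        (2 * ((X * Sᵀ * Aᵀ) i j - (W * A * S * Sᵀ * Aᵀ) i j) * 1) (W i j) :=
      h1.const_mul _
    have hsq : HasDerivAt (fun w : ℝ => (w - W i j) ^ 2)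
        ((2 : ℕ) * (W i j - W i j) ^ (2 - 1) * 1) (W i j) := h1.pow 2
    have htot := (((hasDerivAt_const (W i j) (objD X W A S)).sub hlin).add
      (hsq.const_mul ((A * S * Sᵀ * Aᵀ) j j)))
    erw [htot.deriv]
    norm_num
  have hk : 0 < (W * A * S * Sᵀ * Aᵀ) i j / W i j := div_pos hden hpos
  have hdiff : ∀ w : ℝ, G w - G wstar
      = ((W * A * S * Sᵀ * Aᵀ) i j / W i j) * (w - wstar) ^ 2 := by
    intro w
    rw [hGdef w, hGdef wstar, hderiv, hwstar]
    field_simp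
    ring
  clear_value F G wstar
  constructor
  · intro w
    have h1 := hdiff w
    have h2 : 0 ≤ ((W * A * S * Sᵀ * Aᵀ) i j / W i j) * (w - wstar) ^ 2 :=
      mul_nonneg hk.le (sq_nonneg _)
    linarith
  · intro m hm
    have h1 := hm wstar
    have h2 := hdiff m
    have h3 : (m - wstar) ^ 2 ≤ 0 := by
      by_contra hcon
      push_neg at hcon
      nlinarith
    have h4 : (m - wstar) ^ 2 = 0 := le_antisymm h3 (sq_nonneg _)
    have h5 : m - wstar = 0 := by
      exact pow_eq_zero_iff (two_ne_zero) |>.mp h4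
    linarith
end

section
/- Assume X, W, A, S all have nonnegative entries. Fix indices i, j with 1 ≤ i ≤ n, 1 ≤ j ≤ q, and assume W_{ij} > 0 and (W·A·S·Sᵀ·Aᵀ)_{ij} > 0. Let w* = W_{ij} · (X·Sᵀ·Aᵀ)_{ij} / (W·A·S·Sᵀ·Aᵀ)_{ij} and let W* be the matrix that agrees with W except that its (i,j) entry is replaced by w*. Then the objective does not increase under this multiplicative update: D(W*, A, S) ≤ D(W, A, S). -/
open Matrix

/-- The multiplicative update of the `(i,j)` entry of `W`,
`w* = W_{ij} · (X·Sᵀ·Aᵀ)_{ij} / (W·A·S·Sᵀ·Aᵀ)_{ij}`, does not increase the objective. -/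
theorem objective_nonincreasing_W_update
    (n p q : ℕ)
    (X : Matrix (Fin n) (Fin p) ℝ) (W : Matrix (Fin n) (Fin q) ℝ)
    (A : Matrix (Fin q) (Fin q) ℝ) (S : Matrix (Fin q) (Fin p) ℝ)
    (hX : ∀ i j, 0 ≤ X i j) (hW : ∀ i j, 0 ≤ W i j)
    (hA : ∀ i j, 0 ≤ A i j) (hS : ∀ i j, 0 ≤ S i j)
    (i : Fin n) (j : Fin q)
    (hpos : 0 < W i j) (hden : 0 < (W * A * S * Sᵀ * Aᵀ) i j) :
    objD X (updEntry W i j (W i j * (X * Sᵀ * Aᵀ) i j / (W * A * S * Sᵀ * Aᵀ) i j)) A S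
      ≤ objD X W A S := by
  classical
  set w0 := W i j with hw0
  set d := (W * A * S * Sᵀ * Aᵀ) i j with hd
  set num := (X * Sᵀ * Aᵀ) i j with hnum
  set w := w0 * num / d with hw
  set a := ∑ l, ((A * S) j l)^2 with ha
  have ha0 : 0 ≤ a := Finset.sum_nonneg fun l _ => sq_nonneg _
  have hAS : ∀ m l, 0 ≤ (A * S) m l := fun m l => by
    rw [Matrix.mul_apply]
    exact Finset.sum_nonneg fun x _ => mul_nonneg (hA m x) (hS x l)
  have objD_eq : ∀ (W' : Matrix (Fin n) (Fin q) ℝ),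
      objD X W' A S = ∑ k, ∑ l, (X k l - (W' * A * S) k l)^2 := by
    intro W'
    rw [objD]
    generalize (W' * A * S) = M
    simp [Matrix.trace, Matrix.mul_apply, Matrix.diag, sq, Matrix.sub_apply]
  have key : ∀ (k : Fin n) (l : Fin p), ((updEntry W i j w) * A * S) k l
      = (W * A * S) k l + (if k = i then (w - w0) * (A * S) j l else 0) := by
    intro k l
    rw [Matrix.mul_assoc, Matrix.mul_assoc W, Matrix.mul_apply, Matrix.mul_apply]
    by_cases hk : k = i
    · rw [if_pos hk, hk]
      have hpt : ∀ m : Fin q, updEntry W i j w i m * (A * S) m l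
          = W i m * (A * S) m l + (if m = j then (w - w0) * (A * S) j l else 0) := by
        intro m
        by_cases hm : m = j
        · have hu : updEntry W i j w i m = w := by simp [updEntry, hm]
          rw [hu, hm, ← hw0]
          simp only [if_pos rfl, if_true, ite_true]
          ring
        · have hu : updEntry W i j w i m = W i m := by simp [updEntry, hm]
          rw [hu, if_neg hm, add_zero]
      rw [Finset.sum_congr rfl fun m _ => hpt m, Finset.sum_add_distrib,
        Finset.sum_ite_eq' Finset.univ j]
      simp
    · rw [if_neg hk, add_zero]
      refine Finset.sum_congr rfl fun m _ => ?_
      simp [updEntry, hk]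
  have num_eq : num = ∑ l, X i l * (A * S) j l := by
    rw [hnum, Matrix.mul_assoc, ← Matrix.transpose_mul, Matrix.mul_apply]
    simp [Matrix.transpose_apply]
  have d_eq : d = ∑ l, (W * A * S) i l * (A * S) j l := by
    rw [hd, Matrix.mul_assoc (W * A * S), ← Matrix.transpose_mul, Matrix.mul_apply]
    simp [Matrix.transpose_apply]
  have hd_ge : w0 * a ≤ d := by
    have d_eq2 : d = ∑ m, W i m * ∑ l, (A * S) m l * (A * S) j l := by
      have h1 : ∀ l : Fin p, (W * A * S) i l * (A * S) j l
          = ∑ m, W i m * ((A * S) m l * (A * S) j l) := by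
        intro l
        rw [Matrix.mul_assoc, Matrix.mul_apply, Finset.sum_mul]
        exact Finset.sum_congr rfl fun m _ => by ring
      rw [d_eq, Finset.sum_congr rfl fun l _ => h1 l, Finset.sum_comm]
      exact Finset.sum_congr rfl fun m _ => (Finset.mul_sum _ _ _).symm
    have hterm : w0 * a = W i j * ∑ l, (A * S) j l * (A * S) j l := by
      simp only [hw0, ha, sq, Finset.mul_sum]
    rw [d_eq2, hterm]
    exact Finset.single_le_sum
      (f := fun m => W i m * ∑ l, (A * S) m l * (A * S) j l)
      (fun m _ => mul_nonneg (hW i m)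
        (Finset.sum_nonneg fun l _ => mul_nonneg (hAS m l) (hAS j l)))
      (Finset.mem_univ j)
  have bsum_eq : ∑ l, (X i l - (W * A * S) i l) * (A * S) j l = num - d := by
    rw [num_eq, d_eq, ← Finset.sum_sub_distrib]
    exact Finset.sum_congr rfl fun l _ => by ring
  have expand : objD X (updEntry W i j w) A S
      = objD X W A S + ((w - w0)^2 * a - 2 * (w - w0) * (num - d)) := by
    rw [objD_eq, objD_eq]
    have hpt : ∀ (k : Fin n) (l : Fin p),
        (X k l - ((updEntry W i j w) * A * S) k l)^2
        = (X k l - (W * A * S) k l)^2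
          + (if k = i then ((w - w0)^2 * ((A * S) j l)^2
              - 2 * (w - w0) * ((X i l - (W * A * S) i l) * (A * S) j l)) else 0) := by
      intro k l
      rw [key k l]
      by_cases hk : k = i
      · subst hk; rw [if_pos rfl, if_pos rfl]; ring
      · rw [if_neg hk, if_neg hk, add_zero, add_zero]
    calc ∑ k, ∑ l, (X k l - ((updEntry W i j w) * A * S) k l)^2
        = ∑ k, ∑ l, ((X k l - (W * A * S) k l)^2
          + (if k = i then ((w - w0)^2 * ((A * S) j l)^2
              - 2 * (w - w0) * ((X i l - (W * A * S) i l) * (A * S) j l)) else 0)) :=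
          Finset.sum_congr rfl fun k _ => Finset.sum_congr rfl fun l _ => hpt k l
      _ = (∑ k, ∑ l, (X k l - (W * A * S) k l)^2)
          + ((w - w0)^2 * a - 2 * (w - w0) * (num - d)) := by
          simp only [Finset.sum_add_distrib]
          congr 1
          have hin : ∀ k : Fin n, (∑ l, (if k = i then ((w - w0)^2 * ((A * S) j l)^2
              - 2 * (w - w0) * ((X i l - (W * A * S) i l) * (A * S) j l)) else 0))
              = if k = i then ((w - w0)^2 * a
                - 2 * (w - w0) * (num - d)) else 0 := by
            intro k
            split
            · rw [← bsum_eq, ha, Finset.mul_sum, Finset.mul_sum, ← Finset.sum_sub_distrib]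
            · simp
          rw [Finset.sum_congr rfl fun k _ => hin k, Finset.sum_ite_eq' Finset.univ i]
          simp
  rw [expand]
  have hdne : d ≠ 0 := ne_of_gt hden
  have h1 : (w - w0) * d = w0 * (num - d) := by
    rw [hw, sub_mul, div_mul_cancel₀ _ hdne]; ring
  have key2 : ((w - w0)^2 * a - 2 * (w - w0) * (num - d)) * d^2 ≤ 0 := by
    have e1 : ((w - w0)^2 * a - 2 * (w - w0) * (num - d)) * d^2
        = a * ((w - w0) * d)^2 - 2 * (num - d) * d * ((w - w0) * d) := by ring
    rw [e1, h1]
    have e2 : a * (w0 * (num - d))^2 - 2 * (num - d) * d * (w0 * (num - d))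
        = (w0 * (num - d)^2) * (w0 * a) - 2 * ((w0 * (num - d)^2) * d) := by ring
    rw [e2]
    have hne : 0 ≤ w0 * (num - d)^2 := mul_nonneg hpos.le (sq_nonneg _)
    nlinarith [mul_le_mul_of_nonneg_left hd_ge hne, mul_nonneg hne hden.le]
  have hfin : (w - w0)^2 * a - 2 * (w - w0) * (num - d) ≤ 0 := by
    by_contra h
    push_neg at h
    nlinarith [mul_pos hden hden]
  linarith
end

section
/- Assume X, W, A, S all have nonnegative entries. Fix indices i, j with 1 ≤ i, j ≤ q, and assume A_{ij} > 0 and (Wᵀ·W·A·S·Sᵀ)_{ij} > 0. Let a* = A_{ij} · (Wᵀ·X·Sᵀ)_{ij} / (Wᵀ·W·A·S·Sᵀ)_{ij} and let A* be the matrix that agrees with A except that its (i,j) entry is replaced by a*. Then the objective does not increase under this multiplicative update: D(W, A*, S) ≤ D(W, A, S). -/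
open Matrix


lemma WES_apply {n p q : ℕ} (W : Matrix (Fin n) (Fin q) ℝ) (S : Matrix (Fin q) (Fin p) ℝ)
    (i j : Fin q) (k : Fin n) (l : Fin p) :
    (W * Matrix.single i j (1:ℝ) * S) k l = W k i * S j l := by
  rw [Matrix.mul_assoc]
  simp [Matrix.mul_apply, Matrix.single, ite_and, Finset.sum_ite_eq, Finset.sum_ite_eq']

lemma trace_mul_t {n p : ℕ} (N B : Matrix (Fin n) (Fin p) ℝ) :
    trace (N * Bᵀ) = ∑ k, ∑ l, N k l * B k l := by
  simp [trace, diag, Matrix.mul_apply]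

lemma trace_mul_WES {n p q : ℕ} (W : Matrix (Fin n) (Fin q) ℝ) (S : Matrix (Fin q) (Fin p) ℝ)
    (i j : Fin q) (N : Matrix (Fin n) (Fin p) ℝ) :
    trace (N * (W * Matrix.single i j (1:ℝ) * S)ᵀ) = (Wᵀ * N * Sᵀ) i j := by
  rw [trace_mul_t]
  simp only [WES_apply]
  simp only [Matrix.mul_apply, transpose_apply, Finset.sum_mul]
  rw [Finset.sum_comm]
  exact Finset.sum_congr rfl fun k _ => Finset.sum_congr rfl fun l _ => by ring

/-- The multiplicative update of the `(i,j)` entry of `A`,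
`a* = A_{ij} · (Wᵀ·X·Sᵀ)_{ij} / (Wᵀ·W·A·S·Sᵀ)_{ij}`, does not increase the objective. -/
theorem objective_nonincreasing_A_update
    (n p q : ℕ)
    (X : Matrix (Fin n) (Fin p) ℝ) (W : Matrix (Fin n) (Fin q) ℝ)
    (A : Matrix (Fin q) (Fin q) ℝ) (S : Matrix (Fin q) (Fin p) ℝ)
    (hX : ∀ i j, 0 ≤ X i j) (hW : ∀ i j, 0 ≤ W i j)
    (hA : ∀ i j, 0 ≤ A i j) (hS : ∀ i j, 0 ≤ S i j)
    (i j : Fin q)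
    (hpos : 0 < A i j) (hden : 0 < (Wᵀ * W * A * S * Sᵀ) i j) :
    objD X W (updEntry A i j (A i j * (Wᵀ * X * Sᵀ) i j / (Wᵀ * W * A * S * Sᵀ) i j)) S
      ≤ objD X W A S := by
  set num : ℝ := (Wᵀ * X * Sᵀ) i j with hnum
  set den : ℝ := (Wᵀ * W * A * S * Sᵀ) i j with hdendef
  set a0 : ℝ := A i j with ha0
  set astar : ℝ := a0 * num / den with hastar
  set t0 : ℝ := astar - a0 with ht0
  set E : Matrix (Fin q) (Fin q) ℝ := Matrix.single i j (1:ℝ) with hE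
  set M : Matrix (Fin n) (Fin p) ℝ := W * E * S with hM
  set R : Matrix (Fin n) (Fin p) ℝ := X - W * A * S with hR
  -- update as a rank-one perturbation
  have hupd : updEntry A i j astar = A + t0 • E := by
    ext a b
    by_cases h : a = i ∧ b = j
    · obtain ⟨rfl, rfl⟩ := h
      simp [updEntry, hE, Matrix.single, ht0, ha0]
    · simp only [updEntry, h, if_false, Matrix.add_apply, Matrix.smul_apply, hE,
        Matrix.single, Matrix.of_apply, smul_eq_mul]
      rw [if_neg (by tauto)]
      ring
  have hfac : X - W * (A + t0 • E) * S = R - t0 • M := by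
    rw [hR, hM]
    rw [Matrix.mul_add, Matrix.add_mul]
    rw [Matrix.mul_smul, Matrix.smul_mul]
    abel
  -- trace of symmetric cross term
  have hsymm : trace (M * Rᵀ) = trace (R * Mᵀ) := by
    rw [← Matrix.trace_transpose (M * Rᵀ), Matrix.transpose_mul, Matrix.transpose_transpose]
  have hexpand : objD X W (updEntry A i j astar) S
      = objD X W A S - 2 * t0 * trace (R * Mᵀ) + t0 ^ 2 * trace (M * Mᵀ) := by
    rw [objD, hupd, hfac, objD, ← hR]
    simp only [Matrix.transpose_sub, Matrix.transpose_smul, Matrix.sub_mul, Matrix.mul_sub,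
      Matrix.smul_mul, Matrix.mul_smul, Matrix.trace_sub, Matrix.trace_smul, smul_eq_mul,
      smul_smul]
    rw [hsymm]
    ring
  -- identify the traces
  have htrace1 : trace (R * Mᵀ) = num - den := by
    rw [hM, trace_mul_WES, hR]
    simp only [Matrix.mul_sub, Matrix.sub_mul, Matrix.sub_apply, ← Matrix.mul_assoc]
    rfl
  have htrace2 : trace (M * Mᵀ) = (Wᵀ * W) i i * (S * Sᵀ) j j := by
    rw [trace_mul_t]
    simp only [hM, hE, WES_apply]
    conv_rhs => rw [Matrix.mul_apply, Matrix.mul_apply, Finset.sum_mul_sum]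
    exact Finset.sum_congr rfl fun k _ => Finset.sum_congr rfl fun l _ => by
      simp only [transpose_apply]; ring
  set α : ℝ := (Wᵀ * W) i i * (S * Sᵀ) j j with halpha
  -- nonnegativity facts
  have hP : ∀ a b, 0 ≤ (Wᵀ * W) a b := fun a b => by
    rw [Matrix.mul_apply]
    exact Finset.sum_nonneg fun k _ => mul_nonneg (hW k a) (hW k b)
  have hQ : ∀ a b, 0 ≤ (S * Sᵀ) a b := fun a b => by
    rw [Matrix.mul_apply]
    exact Finset.sum_nonneg fun k _ => mul_nonneg (hS a k) (hS b k)
  have hαnn : 0 ≤ α := mul_nonneg (hP i i) (hQ j j)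
  -- the key bound: α * a0 ≤ den
  have hub : α * a0 ≤ den := by
    have hden' : den = ((Wᵀ * W) * A * (S * Sᵀ)) i j := by
      rw [hdendef, Matrix.mul_assoc (Wᵀ * W * A) S Sᵀ]
    rw [hden']
    have h1 : (Wᵀ * W) i i * A i j ≤ ((Wᵀ * W) * A) i j := by
      rw [Matrix.mul_apply]
      exact Finset.single_le_sum (f := fun k => (Wᵀ * W) i k * A k j)
        (fun k _ => mul_nonneg (hP i k) (hA k j)) (Finset.mem_univ i)
    have hPA : ∀ l, 0 ≤ ((Wᵀ * W) * A) i l := fun l => by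
      rw [Matrix.mul_apply]
      exact Finset.sum_nonneg fun k _ => mul_nonneg (hP i k) (hA k l)
    have h2 : ((Wᵀ * W) * A) i j * (S * Sᵀ) j j ≤ ((Wᵀ * W) * A * (S * Sᵀ)) i j := by
      conv_rhs => rw [Matrix.mul_apply]
      exact Finset.single_le_sum (f := fun l => ((Wᵀ * W) * A) i l * (S * Sᵀ) l j)
        (fun l _ => mul_nonneg (hPA l) (hQ l j)) (Finset.mem_univ j)
    calc α * a0 = (Wᵀ * W) i i * A i j * (S * Sᵀ) j j := by rw [halpha, ha0]; ring
      _ ≤ ((Wᵀ * W) * A) i j * (S * Sᵀ) j j := mul_le_mul_of_nonneg_right h1 (hQ j j)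
      _ ≤ ((Wᵀ * W) * A * (S * Sᵀ)) i j := h2
  -- finish with algebra
  rw [hexpand, htrace1, htrace2]
  have ht : t0 * den = a0 * (num - den) := by
    rw [ht0, hastar]
    field_simp
  have key : (α * t0 ^ 2 - 2 * t0 * (num - den)) * (den * den)
      = a0 * (num - den) ^ 2 * (α * a0 - 2 * den) := by
    linear_combination (α * (t0 * den + a0 * (num - den)) - 2 * (num - den) * den) * ht
  have hrhs : a0 * (num - den) ^ 2 * (α * a0 - 2 * den) ≤ 0 := by
    apply mul_nonpos_of_nonneg_of_nonpos
    · exact mul_nonneg hpos.le (sq_nonneg _)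
    · nlinarith
  have hd2 : 0 < den * den := mul_pos hden hden
  have hfinal : α * t0 ^ 2 - 2 * t0 * (num - den) ≤ 0 := by nlinarith [key, hrhs, hd2]
  linarith
end
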